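/- Let λ and c be real numbers, let Θ : (0,∞) → ℝ be positive and differentiable, and set f(r) = cosh r + c. If f''(r) + (Θ'(r)/Θ(r))·f'(r) + λ·f(r) = 0 for all r > 0, then there exists a constant C > 0 such that Θ(r) = C · (sinh(r/2))^{−(1+λ+cλ)} · (cosh(r/2))^{−(1+λ−cλ)} for all r > 0. -/

import Mathlib

/-- If `Θ > 0` is differentiable on `(0,∞)` and `f(r) = cosh r + c` satisfies
`f'' + (Θ'/Θ)·f' + λ·f = 0` there, then
`Θ(r) = C·(sinh(r/2))^{−(1+λ+cλ)}·(cosh(r/2))^{−(1+λ−cλ)}` for some `C > 0`. -/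
theorem stmt_4 (lam c : ℝ) (Θ : ℝ → ℝ)
    (hΘpos : ∀ r > 0, 0 < Θ r)
    (hΘdiff : ∀ r > 0, DifferentiableAt ℝ Θ r)
    (hode : ∀ r > 0,
      Real.cosh r + (deriv Θ r / Θ r) * Real.sinh r + lam * (Real.cosh r + c) = 0) :
    ∃ C > 0, ∀ r > 0,
      Θ r = C * Real.sinh (r / 2) ^ (-(1 + lam + c * lam))
              * Real.cosh (r / 2) ^ (-(1 + lam - c * lam)) := by
  set a := 1 + lam + c * lam with ha
  set b := 1 + lam - c * lam with hb
  set g : ℝ → ℝ := fun r => Θ r * (Real.sinh (r / 2) ^ a * Real.cosh (r / 2) ^ b) with hg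
  -- g has derivative 0 on Ioi 0
  have key : ∀ r ∈ Set.Ioi (0 : ℝ), HasDerivAt g 0 r := by
    intro r hr
    have hr0 : (0 : ℝ) < r := hr
    have hS : (0 : ℝ) < Real.sinh (r / 2) := (Real.sinh_pos_iff).2 (by linarith)
    have hCh : (0 : ℝ) < Real.cosh (r / 2) := Real.cosh_pos _
    have hs : HasDerivAt (fun x : ℝ => Real.sinh (x / 2)) (Real.cosh (r / 2) * (1 / 2)) r :=
      by have := (Real.hasDerivAt_sinh (r / 2)).comp r ((hasDerivAt_id r).div_const 2); exact this
    have hc : HasDerivAt (fun x : ℝ => Real.cosh (x / 2)) (Real.sinh (r / 2) * (1 / 2)) r :=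
      by have := (Real.hasDerivAt_cosh (r / 2)).comp r ((hasDerivAt_id r).div_const 2); exact this
    have hsa : HasDerivAt (fun x : ℝ => Real.sinh (x / 2) ^ a)
        (Real.cosh (r / 2) * (1 / 2) * a * Real.sinh (r / 2) ^ (a - 1)) r :=
      hs.rpow_const (Or.inl hS.ne')
    have hcb : HasDerivAt (fun x : ℝ => Real.cosh (x / 2) ^ b)
        (Real.sinh (r / 2) * (1 / 2) * b * Real.cosh (r / 2) ^ (b - 1)) r :=
      hc.rpow_const (Or.inl hCh.ne')
    have hu := hsa.mul hcb
    have hΘ : HasDerivAt Θ (deriv Θ r) r := (hΘdiff r hr0).hasDerivAt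
    have hgd := hΘ.mul hu
    convert hgd using 1
    · rfl
    · rfl
    · rfl
    -- show 0 = deriv Θ r * u + Θ r * u'
    have hsr : Real.sinh r = 2 * Real.sinh (r / 2) * Real.cosh (r / 2) := by
      rw [show r = 2 * (r / 2) by ring, Real.sinh_two_mul]
      ring_nf
    have hcr : Real.cosh r = Real.cosh (r / 2) ^ 2 + Real.sinh (r / 2) ^ 2 := by
      rw [show r = 2 * (r / 2) by ring, Real.cosh_two_mul]
      ring_nf
    have hΘr := (hΘpos r hr0).ne'
    have hode' := hode r hr0
    have hD : deriv Θ r * Real.sinh r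
        = -(Θ r * ((1 + lam) * Real.cosh r + c * lam)) := by
      have := hode r hr0
      field_simp at this
      nlinarith [this]
    have hSa1 : Real.sinh (r / 2) ^ (a - 1) = Real.sinh (r / 2) ^ a / Real.sinh (r / 2) := by
      rw [Real.rpow_sub hS, Real.rpow_one]
    have hCb1 : Real.cosh (r / 2) ^ (b - 1) = Real.cosh (r / 2) ^ b / Real.cosh (r / 2) := by
      rw [Real.rpow_sub hCh, Real.rpow_one]
    have hsq : Real.sinh (r / 2) ^ 2 = Real.cosh (r / 2) ^ 2 - 1 := by
      have := Real.cosh_sq_sub_sinh_sq (r / 2); linarith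
    rw [hsr, hcr] at hD
    rw [hSa1, hCb1]
    field_simp
    simp only [ha, hb, Pi.mul_apply]
    linear_combination (-(Real.sinh (r / 2) ^ (1 + lam + c * lam) * Real.cosh (r / 2) ^ (1 + lam - c * lam))) * hD
      + (c * lam * Θ r * Real.sinh (r / 2) ^ (1 + lam + c * lam) * Real.cosh (r / 2) ^ (1 + lam - c * lam)) * hsq
  have hgc : ∀ r ∈ Set.Ioi (0 : ℝ), g r = g 1 := by
    intro r hr
    exact (convex_Ioi (0 : ℝ)).is_const_of_fderivWithin_eq_zero
      (fun x hx => ((key x hx).differentiableAt).differentiableWithinAt)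
      (fun x hx => by
        rw [fderivWithin_of_isOpen isOpen_Ioi hx, (key x hx).hasFDerivAt.fderiv]
        ext
        simp)
      hr (by norm_num)
  have h1 : (0:ℝ) < g 1 := by
    have := hΘpos 1 one_pos
    have hS : (0:ℝ) < Real.sinh (1 / 2 : ℝ) := (Real.sinh_pos_iff).2 (by norm_num)
    exact mul_pos this (mul_pos (Real.rpow_pos_of_pos hS a) (Real.rpow_pos_of_pos (Real.cosh_pos _) b))
  refine ⟨g 1, h1, fun r hr => ?_⟩
  have hS : (0 : ℝ) < Real.sinh (r / 2) := (Real.sinh_pos_iff).2 (by linarith)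
  have hCh : (0 : ℝ) < Real.cosh (r / 2) := Real.cosh_pos _
  have := hgc r hr
  rw [Real.rpow_neg hS.le, Real.rpow_neg hCh.le]
  have hSa := (Real.rpow_pos_of_pos hS a).ne'
  have hCb := (Real.rpow_pos_of_pos hCh b).ne'
  field_simp
  linear_combination this
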